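/- Total force formula at the right end of the cylinder: under the stated hypotheses, ∫_{{v : v₁ ≤ V}} (V − v₁)²·f₋(v) dv + ∫_{{v : v₁ ≥ V}} (v₁ − V)²·f₊(v) dv = ∫_{{u : u₁ ≤ V}} ℓ(u − iV)·f₋(u) du, where ℓ(w) = (1 + α)·w₁² + (1 − α)·∫_{{v : v₁ ≥ 0}} v₁²·K(v, w) dv, and the equality holds in [0, +∞] (all integrands are nonnegative). -/

import Mathlib

open MeasureTheory Set
open scoped ENNReal

namespace RightEndAux

lemma vec3_eq (v : Fin 3 → ℝ) : (![v 0, v 1, v 2] : Fin 3 → ℝ) = v := by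
  funext i; fin_cases i <;> rfl

lemma measurable_vec3 {β : Type*} [MeasurableSpace β] {a b c : β → ℝ}
    (ha : Measurable a) (hb : Measurable b) (hc : Measurable c) :
    Measurable (fun x => (![a x, b x, c x] : Fin 3 → ℝ)) := by
  refine measurable_pi_lambda _ fun i => ?_
  fin_cases i
  · simpa using ha
  · simpa using hb
  · simpa using hc

lemma pi_measurePreserving {φ : Fin 3 → ℝ → ℝ}
    (h : ∀ i, MeasurePreserving (φ i) volume volume) :
    MeasurePreserving (fun (x : Fin 3 → ℝ) i => φ i (x i)) volume volume := by
  have hm : Measurable fun (x : Fin 3 → ℝ) i => φ i (x i) :=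
    measurable_pi_lambda _ fun i => (h i).measurable.comp (measurable_pi_apply i)
  refine ⟨hm, ?_⟩
  rw [volume_pi]
  refine (Measure.pi_eq (μ := fun _ : Fin 3 => (volume : Measure ℝ)) fun s hs => ?_).symm
  rw [Measure.map_apply hm (MeasurableSet.univ_pi hs)]
  have hpre : (fun (x : Fin 3 → ℝ) i => φ i (x i)) ⁻¹' Set.pi Set.univ s
      = Set.pi Set.univ fun i => φ i ⁻¹' s i := by
    ext x; simp [Set.mem_pi]
  rw [hpre, Measure.pi_pi]
  exact Finset.prod_congr rfl fun i _ => (h i).measure_preimage (hs i).nullMeasurableSet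

/-- Reflection in the first coordinate: `v ↦ (2V - v₀, v₁, v₂)`. -/
def reflMap (V : ℝ) : (Fin 3 → ℝ) → (Fin 3 → ℝ) := fun v i => if i = 0 then 2 * V - v i else v i

lemma reflMap_invol (V : ℝ) : Function.Involutive (reflMap V) := by
  intro v; funext i; by_cases h : i = 0 <;> simp [reflMap, h]

lemma reflMap_mp (V : ℝ) : MeasurePreserving (reflMap V) volume volume := by
  have h : ∀ i : Fin 3,
      MeasurePreserving (fun x : ℝ => if i = 0 then 2 * V - x else x) volume volume := by
    intro i; by_cases h : i = 0
    · simpa [h] using Measure.measurePreserving_sub_left (volume : Measure ℝ) (2 * V)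
    · simp only [h, ↓reduceIte]; exact MeasurePreserving.id _
  exact pi_measurePreserving h

lemma reflMap_emb (V : ℝ) : MeasurableEmbedding (reflMap V) :=
  (MeasurableEquiv.mk (Function.Involutive.toPerm _ (reflMap_invol V))
    (reflMap_mp V).measurable (reflMap_mp V).measurable).measurableEmbedding

/-- Shift vector `(V, 0, 0)`. -/
def shiftVec (V : ℝ) : Fin 3 → ℝ := fun i => if i = 0 then V else 0

/-- Translation by `(V,0,0)`. -/
def transMap (V : ℝ) : (Fin 3 → ℝ) → (Fin 3 → ℝ) := fun v => v + shiftVec V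

lemma transMap_mp (V : ℝ) : MeasurePreserving (transMap V) volume volume := by
  have h : ∀ i : Fin 3,
      MeasurePreserving (fun x : ℝ => x + shiftVec V i) volume volume := fun i =>
    measurePreserving_add_right (volume : Measure ℝ) (shiftVec V i)
  exact pi_measurePreserving h

lemma transMap_emb (V : ℝ) : MeasurableEmbedding (transMap V) :=
  (MeasurableEquiv.addRight (shiftVec V)).measurableEmbedding

end RightEndAux

open RightEndAux

/-- Total force formula at the right end of the cylinder, as an identity in `[0,∞]`:
the incident plus reflected momentum flux equals `∫_{u₁ ≤ V} ℓ(u − iV) f₋(u) du`,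
where `ℓ(w) = (1+α)w₁² + (1−α)∫_{v₁ ≥ 0} v₁² K(v,w) dv`. -/
theorem right_end_force_formula
    (V α : ℝ) (hα0 : 0 ≤ α) (hα1 : α < 1)
    (K : (Fin 3 → ℝ) → (Fin 3 → ℝ) → ℝ)
    (hK_meas : Measurable (fun p : (Fin 3 → ℝ) × (Fin 3 → ℝ) => K p.1 p.2))
    (hK_nonneg : ∀ v u, 0 ≤ K v u)
    (fm : (Fin 3 → ℝ) → ℝ)
    (hfm_meas : Measurable fm) (hfm_nonneg : ∀ v, 0 ≤ fm v)
    (fp : (Fin 3 → ℝ) → ℝ≥0∞) (hfp_meas : Measurable fp)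
    (hfp : ∀ v : Fin 3 → ℝ, V ≤ v 0 →
      fp v = ENNReal.ofReal (α * fm ![2 * V - v 0, v 1, v 2])
        + ENNReal.ofReal (1 - α) * ∫⁻ u in {u : Fin 3 → ℝ | u 0 ≤ V},
            ENNReal.ofReal (K ![v 0 - V, v 1, v 2] ![u 0 - V, u 1, u 2] * fm u))
    (ℓ : (Fin 3 → ℝ) → ℝ≥0∞)
    (hℓ : ∀ w : Fin 3 → ℝ, ℓ w = ENNReal.ofReal ((1 + α) * (w 0) ^ 2)
        + ENNReal.ofReal (1 - α) * ∫⁻ v in {v : Fin 3 → ℝ | 0 ≤ v 0},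
            ENNReal.ofReal ((v 0) ^ 2 * K v w)) :
    (∫⁻ v in {v : Fin 3 → ℝ | v 0 ≤ V}, ENNReal.ofReal ((V - v 0) ^ 2 * fm v))
      + ∫⁻ v in {v : Fin 3 → ℝ | V ≤ v 0}, ENNReal.ofReal ((v 0 - V) ^ 2) * fp v
    = ∫⁻ u in {u : Fin 3 → ℝ | u 0 ≤ V}, ℓ ![u 0 - V, u 1, u 2] * ENNReal.ofReal (fm u) := by
  classical
  have hSm : MeasurableSet {v : Fin 3 → ℝ | v 0 ≤ V} :=
    measurableSet_le (measurable_pi_apply 0) measurable_const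
  have hSp : MeasurableSet {v : Fin 3 → ℝ | V ≤ v 0} :=
    measurableSet_le measurable_const (measurable_pi_apply 0)
  have hS0 : MeasurableSet {v : Fin 3 → ℝ | 0 ≤ v 0} :=
    measurableSet_le measurable_const (measurable_pi_apply 0)
  have hvecV : Measurable fun v : Fin 3 → ℝ => (![v 0 - V, v 1, v 2] : Fin 3 → ℝ) :=
    measurable_vec3 ((measurable_pi_apply 0).sub measurable_const)
      (measurable_pi_apply 1) (measurable_pi_apply 2)
  have hvecR : Measurable fun v : Fin 3 → ℝ => (![2 * V - v 0, v 1, v 2] : Fin 3 → ℝ) :=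
    measurable_vec3 (measurable_const.sub (measurable_pi_apply 0))
      (measurable_pi_apply 1) (measurable_pi_apply 2)
  have hJmeas : Measurable fun u : Fin 3 → ℝ =>
      ∫⁻ v in {v : Fin 3 → ℝ | 0 ≤ v 0},
        ENNReal.ofReal ((v 0) ^ 2 * K v ![u 0 - V, u 1, u 2]) := by
    apply Measurable.lintegral_prod_right
    exact ((((measurable_pi_apply 0).comp measurable_snd).pow_const 2).mul
      (hK_meas.comp (measurable_snd.prodMk (hvecV.comp measurable_fst)))).ennreal_ofReal
  have hmeasA : Measurable fun v : Fin 3 → ℝ =>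
      ENNReal.ofReal ((v 0 - V) ^ 2 * (α * fm ![2 * V - v 0, v 1, v 2])) :=
    ((((measurable_pi_apply 0).sub measurable_const).pow_const 2).mul
      (measurable_const.mul (hfm_meas.comp hvecR))).ennreal_ofReal
  -- Step 1: split the reflected-flux integral
  have hsplit : (∫⁻ v in {v : Fin 3 → ℝ | V ≤ v 0}, ENNReal.ofReal ((v 0 - V) ^ 2) * fp v)
      = (∫⁻ v in {v : Fin 3 → ℝ | V ≤ v 0},
          ENNReal.ofReal ((v 0 - V) ^ 2 * (α * fm ![2 * V - v 0, v 1, v 2])))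
        + ENNReal.ofReal (1 - α) * ∫⁻ v in {v : Fin 3 → ℝ | V ≤ v 0},
            ENNReal.ofReal ((v 0 - V) ^ 2) *
              ∫⁻ u in {u : Fin 3 → ℝ | u 0 ≤ V},
                ENNReal.ofReal (K ![v 0 - V, v 1, v 2] ![u 0 - V, u 1, u 2] * fm u) := by
    rw [← lintegral_const_mul' _ _ ENNReal.ofReal_ne_top, ← lintegral_add_left hmeasA]
    refine setLIntegral_congr_fun hSp (fun v hv => ?_)
    rw [hfp v hv, mul_add, ← ENNReal.ofReal_mul (sq_nonneg _)]
    ring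
  -- Step 2: reflection change of variables
  have hA : (∫⁻ v in {v : Fin 3 → ℝ | V ≤ v 0},
        ENNReal.ofReal ((v 0 - V) ^ 2 * (α * fm ![2 * V - v 0, v 1, v 2])))
      = ∫⁻ u in {u : Fin 3 → ℝ | u 0 ≤ V},
          ENNReal.ofReal ((u 0 - V) ^ 2 * (α * fm u)) := by
    have hpre : reflMap V ⁻¹' {u : Fin 3 → ℝ | u 0 ≤ V} = {v : Fin 3 → ℝ | V ≤ v 0} := by
      ext v
      simp only [Set.mem_preimage, Set.mem_setOf_eq, reflMap]
      constructor <;> intro h <;> simp_all <;> linarith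
    have hch := (reflMap_mp V).setLIntegral_comp_preimage_emb (reflMap_emb V)
      (fun u => ENNReal.ofReal ((u 0 - V) ^ 2 * (α * fm u))) {u : Fin 3 → ℝ | u 0 ≤ V}
    rw [hpre] at hch
    rw [← hch]
    refine setLIntegral_congr_fun hSp (fun v hv => ?_)
    have h0 : reflMap V v = ![2 * V - v 0, v 1, v 2] := by
      funext i; fin_cases i <;> simp [reflMap]
    rw [h0]
    congr 1
    have h1 : (![2 * V - v 0, v 1, v 2] : Fin 3 → ℝ) 0 = 2 * V - v 0 := rfl
    rw [h1]
    ring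
  -- Step 3: handle the diffuse part
  have htrans : ∀ u : Fin 3 → ℝ,
      (∫⁻ v in {v : Fin 3 → ℝ | V ≤ v 0},
        ENNReal.ofReal ((v 0 - V) ^ 2 * (K ![v 0 - V, v 1, v 2] ![u 0 - V, u 1, u 2] * fm u)))
      = ∫⁻ v in {v : Fin 3 → ℝ | 0 ≤ v 0},
          ENNReal.ofReal ((v 0) ^ 2 * (K v ![u 0 - V, u 1, u 2] * fm u)) := by
    intro u
    have hpre : transMap V ⁻¹' {v : Fin 3 → ℝ | V ≤ v 0} = {v : Fin 3 → ℝ | 0 ≤ v 0} := by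
      ext v
      simp only [Set.mem_preimage, Set.mem_setOf_eq, transMap, shiftVec, Pi.add_apply]
      constructor <;> intro h <;> simp_all <;> linarith
    have hch := (transMap_mp V).setLIntegral_comp_preimage_emb (transMap_emb V)
      (fun v => ENNReal.ofReal
        ((v 0 - V) ^ 2 * (K ![v 0 - V, v 1, v 2] ![u 0 - V, u 1, u 2] * fm u)))
      {v : Fin 3 → ℝ | V ≤ v 0}
    rw [hpre] at hch
    rw [← hch]
    refine setLIntegral_congr_fun hS0 (fun v hv => ?_)
    have h0 : transMap V v 0 - V = v 0 := by simp [transMap, shiftVec]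
    have h1 : (![transMap V v 0 - V, transMap V v 1, transMap V v 2] : Fin 3 → ℝ) = v := by
      funext i; fin_cases i <;> simp [transMap, shiftVec]
    rw [h1, h0]
  have hfact : ∀ u : Fin 3 → ℝ,
      (∫⁻ v in {v : Fin 3 → ℝ | 0 ≤ v 0},
        ENNReal.ofReal ((v 0) ^ 2 * (K v ![u 0 - V, u 1, u 2] * fm u)))
      = (∫⁻ v in {v : Fin 3 → ℝ | 0 ≤ v 0},
          ENNReal.ofReal ((v 0) ^ 2 * K v ![u 0 - V, u 1, u 2])) * ENNReal.ofReal (fm u) := by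
    intro u
    rw [← lintegral_mul_const' _ _ ENNReal.ofReal_ne_top]
    refine lintegral_congr fun v => ?_
    rw [← ENNReal.ofReal_mul (mul_nonneg (sq_nonneg _) (hK_nonneg _ _)), mul_assoc]
  have hB : (∫⁻ v in {v : Fin 3 → ℝ | V ≤ v 0},
        ENNReal.ofReal ((v 0 - V) ^ 2) *
          ∫⁻ u in {u : Fin 3 → ℝ | u 0 ≤ V},
            ENNReal.ofReal (K ![v 0 - V, v 1, v 2] ![u 0 - V, u 1, u 2] * fm u))
      = ∫⁻ u in {u : Fin 3 → ℝ | u 0 ≤ V},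
          (∫⁻ v in {v : Fin 3 → ℝ | 0 ≤ v 0},
            ENNReal.ofReal ((v 0) ^ 2 * K v ![u 0 - V, u 1, u 2])) * ENNReal.ofReal (fm u) := by
    have hFmeas : Measurable fun p : (Fin 3 → ℝ) × (Fin 3 → ℝ) =>
        ENNReal.ofReal ((p.1 0 - V) ^ 2 *
          (K ![p.1 0 - V, p.1 1, p.1 2] ![p.2 0 - V, p.2 1, p.2 2] * fm p.2)) :=
      (((((measurable_pi_apply 0).comp measurable_fst).sub measurable_const).pow_const 2).mul
        ((hK_meas.comp ((hvecV.comp measurable_fst).prodMk (hvecV.comp measurable_snd))).mul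
          (hfm_meas.comp measurable_snd))).ennreal_ofReal
    have step1 : (∫⁻ v in {v : Fin 3 → ℝ | V ≤ v 0},
          ENNReal.ofReal ((v 0 - V) ^ 2) *
            ∫⁻ u in {u : Fin 3 → ℝ | u 0 ≤ V},
              ENNReal.ofReal (K ![v 0 - V, v 1, v 2] ![u 0 - V, u 1, u 2] * fm u))
        = ∫⁻ v in {v : Fin 3 → ℝ | V ≤ v 0}, ∫⁻ u in {u : Fin 3 → ℝ | u 0 ≤ V},
            ENNReal.ofReal ((v 0 - V) ^ 2 *
              (K ![v 0 - V, v 1, v 2] ![u 0 - V, u 1, u 2] * fm u)) := by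
      refine lintegral_congr fun v => ?_
      rw [← lintegral_const_mul' _ _ ENNReal.ofReal_ne_top]
      refine lintegral_congr fun u => ?_
      rw [← ENNReal.ofReal_mul (sq_nonneg _)]
    have hswap : (∫⁻ v in {v : Fin 3 → ℝ | V ≤ v 0}, ∫⁻ u in {u : Fin 3 → ℝ | u 0 ≤ V},
          ENNReal.ofReal ((v 0 - V) ^ 2 *
            (K ![v 0 - V, v 1, v 2] ![u 0 - V, u 1, u 2] * fm u)))
        = ∫⁻ u in {u : Fin 3 → ℝ | u 0 ≤ V}, ∫⁻ v in {v : Fin 3 → ℝ | V ≤ v 0},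
            ENNReal.ofReal ((v 0 - V) ^ 2 *
              (K ![v 0 - V, v 1, v 2] ![u 0 - V, u 1, u 2] * fm u)) :=
      lintegral_lintegral_swap hFmeas.aemeasurable
    rw [step1, hswap]
    refine lintegral_congr fun u => ?_
    rw [htrans u, hfact u]
  -- assemble
  have ha_meas : Measurable fun u : Fin 3 → ℝ => ENNReal.ofReal ((V - u 0) ^ 2 * fm u) :=
    (((measurable_const.sub (measurable_pi_apply 0)).pow_const 2).mul hfm_meas).ennreal_ofReal
  have hb_meas : Measurable fun u : Fin 3 → ℝ => ENNReal.ofReal ((u 0 - V) ^ 2 * (α * fm u)) :=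
    ((((measurable_pi_apply 0).sub measurable_const).pow_const 2).mul
      (measurable_const.mul hfm_meas)).ennreal_ofReal
  rw [hsplit, hA, hB, ← lintegral_const_mul' _ _ ENNReal.ofReal_ne_top, ← add_assoc,
    ← lintegral_add_left ha_meas, ← lintegral_add_left (show Measurable fun u : Fin 3 → ℝ => ENNReal.ofReal ((V - u 0) ^ 2 * fm u) + ENNReal.ofReal ((u 0 - V) ^ 2 * (α * fm u)) from ha_meas.add hb_meas)]
  refine lintegral_congr fun u => ?_
  rw [hℓ ![u 0 - V, u 1, u 2]]
  have h0 : (![u 0 - V, u 1, u 2] : Fin 3 → ℝ) 0 = u 0 - V := rfl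
  rw [h0, add_mul, mul_assoc]
  congr 1
  rw [← ENNReal.ofReal_mul (mul_nonneg (by linarith : (0:ℝ) ≤ 1 + α) (sq_nonneg _)),
    ← ENNReal.ofReal_add (mul_nonneg (sq_nonneg _) (hfm_nonneg u))
      (mul_nonneg (sq_nonneg _) (mul_nonneg hα0 (hfm_nonneg u)))]
  congr 1
  ring
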